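/- arXiv:2303.17137 — 2 statements merged into one kernel-verified Lean document; each statement's English description precedes it below -/
import Mathlib

section
/- Let R be a real 3×3 rotation matrix and write r_{ij} for the (i,j) entry of M = Rᵀ. Assume r₃₁ = 0 and r₃₂ ≠ 0, and let K be the intrinsic matrix with rows (f_x, 0, c_x), (0, f_y, c_y), (0, 0, 1), where f_x ≠ 0 and f_y ≠ 0. For any horizontal direction d = (x_v, y_v, 0) with y_v ≠ 0, let v_d = π(K (M d)) and v₂ = π(K (M e₂)) be the dehomogenized vanishing points of d and of e₂ = (0,1,0). Then f_x · r₁₁ · ((v_d)₂ − (v₂)₂) = f_y · r₂₁ · ((v_d)₁ − (v₂)₁); that is, the horizon line through the vanishing points has slope (f_y/f_x)(r₂₁/r₁₁) when r₁₁ ≠ 0. -/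
open Matrix

/-- Dehomogenization map `π (x, y, z) = (x/z, y/z)`. -/
noncomputable def dehom (v : Fin 3 → ℝ) : Fin 2 → ℝ := ![v 0 / v 2, v 1 / v 2]

/-- When `r₃₁ = 0` and `r₃₂ ≠ 0` (with `M = Rᵀ` for a rotation `R`), the dehomogenized
vanishing points of any horizontal direction `d = (x_v, y_v, 0)` (with `y_v ≠ 0`) and of
`e₂` satisfy `f_x r₁₁ ((v_d)₂ − (v₂)₂) = f_y r₂₁ ((v_d)₁ − (v₂)₁)`: the horizon line has
slope `(f_y/f_x)(r₂₁/r₁₁)`. -/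
theorem horizon_slope
    (R : Matrix (Fin 3) (Fin 3) ℝ)
    (hR : Rᵀ * R = 1) (hdet : R.det = 1)
    (M : Matrix (Fin 3) (Fin 3) ℝ) (hM : M = Rᵀ)
    (hr31 : M 2 0 = 0) (hr32 : M 2 1 ≠ 0)
    (fx fy cx cy : ℝ) (hfx : fx ≠ 0) (hfy : fy ≠ 0)
    (K : Matrix (Fin 3) (Fin 3) ℝ)
    (hK : K = !![fx, 0, cx; 0, fy, cy; 0, 0, 1])
    (xv yv : ℝ) (hyv : yv ≠ 0)
    (vd v2 : Fin 2 → ℝ)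
    (hvd : vd = dehom (K.mulVec (M.mulVec ![xv, yv, 0])))
    (hv2 : v2 = dehom (K.mulVec (M.mulVec ![(0 : ℝ), 1, 0]))) :
    fx * M 0 0 * (vd 1 - v2 1) = fy * M 1 0 * (vd 0 - v2 0) := by
  subst hvd hv2 hK
  have hden : M 2 1 * yv ≠ 0 := mul_ne_zero hr32 hyv
  simp [dehom, mulVec, dotProduct, Fin.sum_univ_three, hr31]
  field_simp
  ring
end

section
/- Let n be a natural number, Q a real n×n orthogonal matrix (Qᵀ Q = I), and S a real n×n symmetric positive semidefinite matrix. Then tr(Q S) ≤ tr(S). -/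
open Matrix

/-- For an orthogonal matrix `Q` (`Qᵀ Q = I`) and a symmetric positive semidefinite
matrix `S`, one has `tr(Q S) ≤ tr(S)`. -/
theorem trace_orthogonal_mul_posSemidef_le
    (n : ℕ) (Q S : Matrix (Fin n) (Fin n) ℝ)
    (hQ : Qᵀ * Q = 1) (hSsymm : Sᵀ = S) (hS : S.PosSemidef) :
    (Q * S).trace ≤ S.trace := by
  classical
  set R := (open scoped MatrixOrder in CFC.sqrt S) with hRdef
  have hRR : R * R = S := by open scoped MatrixOrder in exact CFC.sqrt_mul_sqrt_self S hS.nonneg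
  have hRsymm : Rᵀ = R := by
    have := (open scoped MatrixOrder in (CFC.sqrt_nonneg S).posSemidef).isHermitian
    simpa [Matrix.IsHermitian] using this
  -- trace of AᵀA as sum of squares
  have key : ∀ A : Matrix (Fin n) (Fin n) ℝ,
      (Aᵀ * A).trace = ∑ p : Fin n × Fin n, (A p.1 p.2) ^ 2 := by
    intro A
    rw [Fintype.sum_prod_type]
    simp [Matrix.trace, Matrix.mul_apply, Matrix.diag, sq]
    rw [Finset.sum_comm]
  have htr : (Q * S).trace = ∑ p : Fin n × Fin n, (Q * R) p.1 p.2 * R p.1 p.2 := by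
    rw [← hRR, ← mul_assoc, Fintype.sum_prod_type]
    simp only [Matrix.trace, Matrix.mul_apply, Matrix.diag]
    refine Finset.sum_congr rfl fun i _ => Finset.sum_congr rfl fun j _ => ?_
    have hsym : R j i = R i j := by
      conv_lhs => rw [← hRsymm]
      simp [Matrix.transpose_apply]
    rw [hsym]
  have h1 : ∑ p : Fin n × Fin n, ((Q * R) p.1 p.2) ^ 2 = S.trace := by
    rw [← key, Matrix.transpose_mul, Matrix.mul_assoc, ← Matrix.mul_assoc Qᵀ, hQ,
      Matrix.one_mul, hRsymm, hRR]
  have h2 : ∑ p : Fin n × Fin n, (R p.1 p.2) ^ 2 = S.trace := by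
    rw [← key, hRsymm, hRR]
  have hcs := Finset.sum_mul_sq_le_sq_mul_sq Finset.univ
      (fun p : Fin n × Fin n => (Q * R) p.1 p.2) (fun p => R p.1 p.2)
  rw [h1, h2] at hcs
  have htrS : 0 ≤ S.trace := by
    exact hS.trace_nonneg
  calc (Q * S).trace ≤ |(Q * S).trace| := le_abs_self _
    _ = Real.sqrt ((Q * S).trace ^ 2) := (Real.sqrt_sq_eq_abs _).symm
    _ ≤ Real.sqrt (S.trace * S.trace) := by
        apply Real.sqrt_le_sqrt; rw [htr]; exact hcs
    _ = S.trace := Real.sqrt_mul_self htrS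
end
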